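/- Let μ : G₁ → G₂ be a continuous homomorphism of profinite groups and N ⊆ G₁ a closed normal subgroup. Assume that U ↦ μ⁻¹(U) gives a one-to-one correspondence between open subgroups of G₂ and those open subgroups of G₁ that contain N. Then μ induces an isomorphism of topological groups G₁/N ≅ G₂. -/

import Mathlib

open Pointwise in
/-- In a profinite group, a closed subgroup is the intersection of the open subgroups
containing it: for any `x ∉ H` there is an open subgroup `V ⊇ H` avoiding `x`. -/
theorem exists_open_subgroup_superset_notMem
    {G : Type*} [Group G] [TopologicalSpace G] [IsTopologicalGroup G]
    [CompactSpace G] [T2Space G] [TotallyDisconnectedSpace G]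
    {H : Subgroup G} (hH : IsClosed (H : Set G)) {x : G} (hx : x ∉ H) :
    ∃ V : Subgroup G, IsOpen (V : Set G) ∧ H ≤ V ∧ x ∉ V := by
  have hHc : IsCompact (H : Set G) := hH.isCompact
  have hxo : IsOpen ({x}ᶜ : Set G) := isClosed_singleton.isOpen_compl
  have hsub : (H : Set G) ⊆ {x}ᶜ := fun h hh hmem => hx (by simpa using hmem ▸ hh)
  obtain ⟨W, hW, hHW⟩ := compact_open_separated_mul_right hHc hxo hsub
  obtain ⟨W', hW'W, hW'o, h1W'⟩ := mem_nhds_iff.mp hW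
  obtain ⟨C, hCclopen, h1C, hCW'⟩ := compact_exists_isClopen_in_isOpen hW'o h1W'
  obtain ⟨K, hK⟩ :=
    IsTopologicalGroup.exist_openNormalSubgroup_sub_clopen_nhds_of_one hCclopen h1C
  refine ⟨H ⊔ K.toSubgroup, ?_, le_sup_left, ?_⟩
  · exact Subgroup.isOpen_mono le_sup_right K.toOpenSubgroup.isOpen
  · intro hmem
    have hset : ((H ⊔ K.toSubgroup : Subgroup G) : Set G)
        = (H : Set G) * (K.toSubgroup : Set G) := Subgroup.mul_normal H K.toSubgroup
    have hx' : (x : G) ∈ (H : Set G) * (K.toSubgroup : Set G) := by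
      rw [← hset]; exact hmem
    obtain ⟨a, ha, b, hb, hab⟩ := hx'
    exact (hHW (Set.mul_mem_mul ha (hW'W (hCW' (hK hb))))) (by simp [← hab])

/-- Let `μ : G₁ → G₂` be a continuous homomorphism of profinite groups and `N ⊆ G₁` a closed
normal subgroup. Assume `U ↦ μ⁻¹(U)` gives a one-to-one correspondence between open subgroups
of `G₂` and open subgroups of `G₁` containing `N`. Then `μ` induces an isomorphism of
topological groups `G₁/N ≅ G₂`. -/
theorem quotient_iso_of_open_subgroup_correspondence
    {G₁ G₂ : Type*}
    [Group G₁] [TopologicalSpace G₁] [IsTopologicalGroup G₁]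
    [CompactSpace G₁] [T2Space G₁] [TotallyDisconnectedSpace G₁]
    [Group G₂] [TopologicalSpace G₂] [IsTopologicalGroup G₂]
    [CompactSpace G₂] [T2Space G₂] [TotallyDisconnectedSpace G₂]
    (μ : G₁ →* G₂) (hμ : Continuous μ)
    (N : Subgroup G₁) [N.Normal] (hN : IsClosed (N : Set G₁))
    (hcontain : ∀ U : Subgroup G₂, IsOpen (U : Set G₂) → N ≤ U.comap μ)
    (hbij : ∀ V : Subgroup G₁, IsOpen (V : Set G₁) → N ≤ V →
      ∃! U : Subgroup G₂, IsOpen (U : Set G₂) ∧ U.comap μ = V) :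
    ∃ e : (G₁ ⧸ N) ≃* G₂, Continuous e ∧ Continuous e.symm ∧
      ∀ g : G₁, e (QuotientGroup.mk g) = μ g := by
  -- `N ≤ ker μ`
  have hNker : N ≤ μ.ker := by
    intro x hxN
    by_contra hxk
    have hxbot : μ x ∉ (⊥ : Subgroup G₂) := by
      simpa [MonoidHom.mem_ker] using hxk
    obtain ⟨U, hUo, _, hxU⟩ :=
      exists_open_subgroup_superset_notMem (H := (⊥ : Subgroup G₂))
        (by simpa using (isClosed_singleton (x := (1 : G₂)))) hxbot
    exact hxU (hcontain U hUo hxN)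
  -- `ker μ ≤ N`
  have hkerN : μ.ker ≤ N := by
    intro x hxk
    by_contra hxN
    obtain ⟨V, hVo, hNV, hxV⟩ := exists_open_subgroup_superset_notMem hN hxN
    obtain ⟨U, ⟨hUo, hUV⟩, _⟩ := hbij V hVo hNV
    apply hxV
    rw [← hUV]
    have h1 : μ x = 1 := hxk
    rw [Subgroup.mem_comap, h1]; exact U.one_mem
  have hNeq : N = μ.ker := le_antisymm hNker hkerN
  -- `μ` is surjective
  have hsurj : Function.Surjective μ := by
    intro y
    by_contra hy
    have hyr : y ∉ μ.range := by
      intro hmem; obtain ⟨x, hx⟩ := hmem; exact hy ⟨x, hx⟩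
    have hrc : IsClosed ((μ.range : Subgroup G₂) : Set G₂) := by
      have : IsCompact (Set.range μ) := isCompact_range hμ
      simpa [MonoidHom.coe_range] using this.isClosed
    obtain ⟨U, hUo, hrU, hyU⟩ := exists_open_subgroup_superset_notMem hrc hyr
    obtain ⟨U₀, _, huniq⟩ := hbij ⊤ isOpen_univ le_top
    have hU : U = U₀ := by
      apply huniq
      refine ⟨hUo, ?_⟩
      ext g
      simp only [Subgroup.mem_comap, Subgroup.mem_top, iff_true]
      exact hrU ⟨g, rfl⟩
    have hT : (⊤ : Subgroup G₂) = U₀ := huniq ⊤ ⟨isOpen_univ, rfl⟩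
    exact hyU (by rw [hU, ← hT]; trivial)
  -- build the isomorphism
  let e : (G₁ ⧸ N) ≃* G₂ :=
    (QuotientGroup.quotientMulEquivOfEq hNeq).trans
      (QuotientGroup.quotientKerEquivOfSurjective μ hsurj)
  have hemk : ∀ g : G₁, e (QuotientGroup.mk g) = μ g := fun g => rfl
  have hcont : Continuous e := by
    rw [(QuotientGroup.isQuotientMap_mk N).continuous_iff]
    exact (funext hemk : (e ∘ QuotientGroup.mk) = μ) ▸ hμ
  have hcont' : Continuous e.symm :=
    (Continuous.homeoOfEquivCompactToT2 (f := e.toEquiv) hcont).symm.continuous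
  exact ⟨e, hcont, hcont', hemk⟩
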